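/- For any constant $\alpha \in (0,2)$ and dimension $d \geq 1$, and for any nonzero vector $x \in \mathbb{R}^d$, the integral $\int_{\mathbb{R}^d} \frac{1 - \cos(\langle t, x\rangle)}{|t|^{d+\alpha}}\, dt$ equals $C(d,\alpha) |x|^\alpha$, where $C(d,\alpha) = \frac{2\pi^{d/2}\Gamma(1-\alpha/2)}{\alpha 2^{\alpha}\Gamma((d+\alpha)/2)}$. -/

import Mathlib

open MeasureTheory Real

/-- The constant `C(d,α) = 2 π^{d/2} Γ(1-α/2) / (α 2^α Γ((d+α)/2))`. -/
noncomputable def energyConst (d : ℕ) (α : ℝ) : ℝ :=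
  (2 * Real.pi ^ ((d : ℝ) / 2) * Real.Gamma (1 - α / 2)) /
    (α * 2 ^ α * Real.Gamma (((d : ℝ) + α) / 2))

section Aux

open Set Filter Topology

lemma one_sub_exp_neg_le (u : ℝ) : 1 - Real.exp (-u) ≤ u := by
  have := Real.add_one_le_exp (-u); linarith

lemma one_sub_exp_neg_nonneg {u : ℝ} (hu : 0 ≤ u) : 0 ≤ 1 - Real.exp (-u) := by
  have : Real.exp (-u) ≤ 1 := Real.exp_le_one_iff.mpr (by linarith)
  linarith

/-- integrand near `-2 < γ < -1`: `u^γ (1 - e^{-u})` integrable on `(0,∞)`. -/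
lemma intA {γ : ℝ} (h1 : -2 < γ) (h2 : γ < -1) :
    IntegrableOn (fun u : ℝ => u ^ γ * (1 - Real.exp (-u))) (Ioi 0) := by
  have hmeas : Measurable (fun u : ℝ => u ^ γ * (1 - Real.exp (-u))) :=
    (measurable_id.pow_const γ).mul ((measurable_const.sub (measurable_id.neg.exp)))
  have hIoc : IntegrableOn (fun u : ℝ => u ^ γ * (1 - Real.exp (-u))) (Ioc 0 1) := by
    have hbase : IntegrableOn (fun u : ℝ => u ^ (γ + 1)) (Ioc 0 1) :=
      (intervalIntegral.intervalIntegrable_rpow' (by linarith)).1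
    refine Integrable.mono' hbase hmeas.aestronglyMeasurable ?_
    filter_upwards [ae_restrict_mem measurableSet_Ioc] with u hu
    rcases hu with ⟨hu0, hu1⟩
    rw [Real.norm_eq_abs, abs_mul, abs_of_nonneg (Real.rpow_nonneg hu0.le γ),
      abs_of_nonneg (one_sub_exp_neg_nonneg hu0.le)]
    calc u ^ γ * (1 - Real.exp (-u)) ≤ u ^ γ * u := by
          exact mul_le_mul_of_nonneg_left (one_sub_exp_neg_le u) (Real.rpow_nonneg hu0.le γ)
      _ = u ^ (γ + 1) := by rw [Real.rpow_add hu0, Real.rpow_one]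
  have hIoi : IntegrableOn (fun u : ℝ => u ^ γ * (1 - Real.exp (-u))) (Ioi 1) := by
    have hbase : IntegrableOn (fun u : ℝ => u ^ γ) (Ioi 1) :=
      integrableOn_Ioi_rpow_of_lt h2 one_pos
    refine Integrable.mono' hbase hmeas.aestronglyMeasurable ?_
    filter_upwards [ae_restrict_mem measurableSet_Ioi] with u hu
    have hu0 : (0:ℝ) < u := lt_trans one_pos hu
    rw [Real.norm_eq_abs, abs_mul, abs_of_nonneg (Real.rpow_nonneg hu0.le γ),
      abs_of_nonneg (one_sub_exp_neg_nonneg hu0.le)]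
    have : 1 - Real.exp (-u) ≤ 1 := by have := Real.exp_pos (-u); linarith
    calc u ^ γ * (1 - Real.exp (-u)) ≤ u ^ γ * 1 :=
          mul_le_mul_of_nonneg_left this (Real.rpow_nonneg hu0.le γ)
      _ = u ^ γ := mul_one _
  have := hIoc.union hIoi
  rwa [Ioc_union_Ioi_eq_Ioi (by norm_num : (0:ℝ) ≤ 1)] at this

lemma intB {γ c : ℝ} (h1 : -1 < γ) (h2 : γ < 0) (hc : 0 ≤ c) :
    IntegrableOn (fun s : ℝ => s ^ γ * (1 - Real.exp (-(c / s)))) (Ioi 0) := by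
  have hmeas : Measurable (fun s : ℝ => s ^ γ * (1 - Real.exp (-(c / s)))) :=
    (measurable_id.pow_const γ).mul
      (measurable_const.sub ((measurable_const.div measurable_id).neg.exp))
  have hIoc : IntegrableOn (fun s : ℝ => s ^ γ * (1 - Real.exp (-(c / s)))) (Ioc 0 1) := by
    have hbase : IntegrableOn (fun s : ℝ => s ^ γ) (Ioc 0 1) :=
      (intervalIntegral.intervalIntegrable_rpow' (by linarith)).1
    refine Integrable.mono' hbase hmeas.aestronglyMeasurable ?_
    filter_upwards [ae_restrict_mem measurableSet_Ioc] with s hs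
    rcases hs with ⟨hs0, _⟩
    have hcs : 0 ≤ c / s := div_nonneg hc hs0.le
    rw [Real.norm_eq_abs, abs_mul, abs_of_nonneg (Real.rpow_nonneg hs0.le γ),
      abs_of_nonneg (one_sub_exp_neg_nonneg hcs)]
    have h1' : 1 - Real.exp (-(c / s)) ≤ 1 := by have := Real.exp_pos (-(c / s)); linarith
    calc s ^ γ * (1 - Real.exp (-(c / s))) ≤ s ^ γ * 1 :=
          mul_le_mul_of_nonneg_left h1' (Real.rpow_nonneg hs0.le γ)
      _ = s ^ γ := mul_one _
  have hIoi : IntegrableOn (fun s : ℝ => s ^ γ * (1 - Real.exp (-(c / s)))) (Ioi 1) := by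
    have hbase : IntegrableOn (fun s : ℝ => c * s ^ (γ - 1)) (Ioi 1) :=
      (integrableOn_Ioi_rpow_of_lt (by linarith) one_pos).const_mul c
    refine Integrable.mono' hbase hmeas.aestronglyMeasurable ?_
    filter_upwards [ae_restrict_mem measurableSet_Ioi] with s hs
    have hs0 : (0:ℝ) < s := lt_trans one_pos hs
    have hcs : 0 ≤ c / s := div_nonneg hc hs0.le
    rw [Real.norm_eq_abs, abs_mul, abs_of_nonneg (Real.rpow_nonneg hs0.le γ),
      abs_of_nonneg (one_sub_exp_neg_nonneg hcs)]
    calc s ^ γ * (1 - Real.exp (-(c / s))) ≤ s ^ γ * (c / s) :=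
          mul_le_mul_of_nonneg_left (one_sub_exp_neg_le _) (Real.rpow_nonneg hs0.le γ)
      _ = c * s ^ (γ - 1) := by
          rw [Real.rpow_sub hs0, Real.rpow_one]; field_simp
  have := hIoc.union hIoi
  rwa [Ioc_union_Ioi_eq_Ioi (by norm_num : (0:ℝ) ≤ 1)] at this

lemma aux_K {α : ℝ} (hα : 0 < α) (hα2 : α < 2) :
    ∫ u in Ioi (0:ℝ), u ^ (-(α/2) - 1) * (1 - Real.exp (-u))
      = (2/α) * Real.Gamma (1 - α/2) := by
  have hs : 0 < 1 - α/2 := by linarith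
  have hexp : (1 - α/2 - 1) = -(α/2) := by ring
  have hGint : IntegrableOn (fun u : ℝ => Real.exp (-u) * u ^ (-(α/2))) (Ioi 0) := by
    have := Real.GammaIntegral_convergent hs
    rwa [hexp] at this
  have hGval : ∫ u in Ioi (0:ℝ), Real.exp (-u) * u ^ (-(α/2)) = Real.Gamma (1 - α/2) := by
    rw [Real.Gamma_eq_integral hs, hexp]
  set F : ℝ → ℝ := fun u => -(2/α) * (u ^ (-(α/2)) * (1 - Real.exp (-u))) with hF
  set G : ℝ → ℝ := fun u =>
    u ^ (-(α/2) - 1) * (1 - Real.exp (-u)) - (2/α) * (Real.exp (-u) * u ^ (-(α/2))) with hG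
  have hderiv : ∀ u ∈ Ioi (0:ℝ), HasDerivAt F (G u) u := by
    intro u hu
    have hu0 : (0:ℝ) < u := hu
    have h1 : HasDerivAt (fun u : ℝ => u ^ (-(α/2))) ((-(α/2)) * u ^ (-(α/2) - 1)) u :=
      Real.hasDerivAt_rpow_const (Or.inl hu0.ne')
    have h2 : HasDerivAt (fun u : ℝ => 1 - Real.exp (-u)) (-(Real.exp (-u) * (-1))) u :=
      ((hasDerivAt_neg u).exp).const_sub 1
    have := (h1.mul h2).const_mul (-(2/α))
    refine this.congr_deriv ?_
    simp only [hG]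
    field_simp
    ring
  have hcont : ContinuousWithinAt F (Ici (0:ℝ)) 0 := by
    have hF0 : F 0 = 0 := by simp [hF]
    rw [ContinuousWithinAt, hF0]
    refine squeeze_zero_norm' (a := fun u : ℝ => (2/α) * u ^ (1 - α/2)) ?_ ?_
    · filter_upwards [self_mem_nhdsWithin] with u (hu : u ∈ Ici (0:ℝ))
      rcases eq_or_lt_of_le (mem_Ici.mp hu) with h | h
      · simp [hF, ← h, Real.zero_rpow (by linarith : (1:ℝ) - α/2 ≠ 0)]
      · have h0 : (0:ℝ) < u := h
        simp only [hF, Real.norm_eq_abs, abs_mul, abs_neg]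
        rw [abs_of_nonneg (by positivity : (0:ℝ) ≤ 2/α),
          abs_of_nonneg (Real.rpow_nonneg h0.le _),
          abs_of_nonneg (one_sub_exp_neg_nonneg h0.le)]
        have : u ^ (-(α/2)) * (1 - Real.exp (-u)) ≤ u ^ (-(α/2)) * u :=
          mul_le_mul_of_nonneg_left (one_sub_exp_neg_le u) (Real.rpow_nonneg h0.le _)
        refine mul_le_mul_of_nonneg_left (this.trans_eq ?_) (by positivity)
        rw [← Real.rpow_add_one h0.ne']
        ring_nf
    · have hc : ContinuousAt (fun x : ℝ => x ^ (1 - α/2)) 0 :=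
        Real.continuousAt_rpow_const 0 _ (Or.inr (by linarith))
      have h0 : (0:ℝ) ^ ((1:ℝ) - α/2) = 0 := Real.zero_rpow (by linarith)
      have := (hc.tendsto.mono_left (nhdsWithin_le_nhds (s := Ici (0:ℝ)))).const_mul (2/α)
      rw [h0, mul_zero] at this
      exact this
  have htop : Tendsto F atTop (𝓝 0) := by
    have h1 : Tendsto (fun u : ℝ => u ^ (-(α/2))) atTop (𝓝 0) :=
      tendsto_rpow_neg_atTop (by linarith)
    have h2 : Tendsto (fun u : ℝ => 1 - Real.exp (-u)) atTop (𝓝 1) := by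
      have : Tendsto (fun u : ℝ => Real.exp (-u)) atTop (𝓝 0) :=
        Real.tendsto_exp_atBot.comp tendsto_neg_atTop_atBot
      simpa using tendsto_const_nhds.sub this
    have := (h1.mul h2).const_mul (-(2/α))
    rw [show ((-(2/α)) * ((0:ℝ) * 1)) = 0 by ring] at this
    exact this.congr fun u => by rw [hF]
  have hf'int : IntegrableOn G (Ioi (0:ℝ)) :=
    (intA (by linarith) (by linarith)).sub (hGint.const_mul (2/α))
  have h0 : ∫ u in Ioi (0:ℝ), G u = 0 - F 0 :=
    integral_Ioi_of_hasDerivAt_of_tendsto hcont hderiv hf'int htop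
  have hsplit : ∫ u in Ioi (0:ℝ), G u
      = (∫ u in Ioi (0:ℝ), u ^ (-(α/2) - 1) * (1 - Real.exp (-u)))
        - (2/α) * ∫ u in Ioi (0:ℝ), Real.exp (-u) * u ^ (-(α/2)) := by
    rw [hG, integral_sub (intA (by linarith) (by linarith)) (hGint.const_mul (2/α)),
      integral_const_mul]
  have hF0 : F 0 = 0 := by simp [hF]
  rw [hsplit, hF0, sub_zero, hGval] at h0
  linarith

lemma aux_C {α c : ℝ} (hα : 0 < α) (hα2 : α < 2) (hc : 0 < c) :
    ∫ s in Ioi (0:ℝ), s ^ (α/2 - 1) * (1 - Real.exp (-(c / s)))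
      = c ^ (α/2) * ((2/α) * Real.Gamma (1 - α/2)) := by
  set g : ℝ → ℝ := fun s => s ^ (α/2 - 1) * (1 - Real.exp (-(c / s))) with hg
  have step1 : ∫ s in Ioi (0:ℝ), g s
      = ∫ x in Ioi (0:ℝ), x ^ (-(α/2) - 1) * (1 - Real.exp (-(c * x))) := by
    rw [← integral_comp_rpow_Ioi g (p := (-1:ℝ)) (by norm_num)]
    refine setIntegral_congr_fun measurableSet_Ioi fun x hx => ?_
    have hx0 : (0:ℝ) < x := hx
    have hxinv : x ^ ((-1):ℝ) = x⁻¹ := Real.rpow_neg_one x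
    rw [hg]
    simp only [smul_eq_mul, hxinv]
    rw [Real.inv_rpow hx0.le, ← Real.rpow_neg hx0.le, div_inv_eq_mul c x]
    rw [show |(-1:ℝ)| = 1 by norm_num, one_mul]
    rw [← mul_assoc, ← Real.rpow_add hx0]
    ring_nf
  have step2 : ∫ x in Ioi (0:ℝ), x ^ (-(α/2) - 1) * (1 - Real.exp (-(c * x)))
      = c ^ (α/2) * ((2/α) * Real.Gamma (1 - α/2)) := by
    have hcongr : ∀ x ∈ Ioi (0:ℝ),
        x ^ (-(α/2) - 1) * (1 - Real.exp (-(c * x)))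
          = c ^ (α/2 + 1) * ((c * x) ^ (-(α/2) - 1) * (1 - Real.exp (-(c * x)))) := by
      intro x hx
      have hx0 : (0:ℝ) < x := hx
      rw [Real.mul_rpow hc.le hx0.le, ← mul_assoc, ← mul_assoc,
        ← Real.rpow_add hc, show α/2 + 1 + (-(α/2) - 1) = 0 by ring, Real.rpow_zero, one_mul]
    rw [setIntegral_congr_fun measurableSet_Ioi hcongr, integral_const_mul,
      integral_comp_mul_left_Ioi (fun u => u ^ (-(α/2) - 1) * (1 - Real.exp (-u))) 0 hc,
      mul_zero, aux_K hα hα2, smul_eq_mul, ← mul_assoc, ← mul_assoc,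
      Real.rpow_add hc, Real.rpow_one]
    field_simp
  rw [step1, step2]

lemma abs_one_sub_cos_le (r : ℝ) : ‖1 - Real.cos r‖ ≤ 2 := by
  rw [Real.norm_eq_abs, abs_le]
  constructor
  · linarith [@Real.cos_le_one r]
  · linarith [@Real.neg_one_le_cos r]

lemma one_sub_cos_nonneg (r : ℝ) : 0 ≤ 1 - Real.cos r := by
  linarith [@Real.cos_le_one r]


end Aux

section Gaussian
open Set Filter Topology Complex
variable {d : ℕ}

lemma aux_exp_integrable {s : ℝ} (hs : 0 < s) :
    Integrable (fun t : EuclideanSpace ℝ (Fin d) => Real.exp (-(s * ‖t‖^2))) := by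
  have h := (GaussianFourier.integrable_cexp_neg_mul_sq_norm_add
    (show 0 < (s:ℂ).re from hs) 0 (0 : EuclideanSpace ℝ (Fin d))).re
  refine h.congr (Filter.Eventually.of_forall fun t => ?_)
  simp only [zero_mul, add_zero, RCLike.re_eq_complex_re]
  rw [show -(s:ℂ) * (‖t‖:ℂ)^2 = ((-(s * ‖t‖^2) : ℝ) : ℂ) by push_cast; ring,
    ← Complex.ofReal_exp, Complex.ofReal_re]

lemma aux_cos_integrable {s : ℝ} (hs : 0 < s) (x : EuclideanSpace ℝ (Fin d)) :
    Integrable (fun t : EuclideanSpace ℝ (Fin d) =>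
      Real.cos (inner ℝ t x) * Real.exp (-(s * ‖t‖^2))) := by
  have h := (GaussianFourier.integrable_cexp_neg_mul_sq_norm_add
    (show 0 < (s:ℂ).re from hs) Complex.I x).re
  refine h.congr (Filter.Eventually.of_forall fun t => ?_)
  simp only [RCLike.re_eq_complex_re]
  have hre : (-(s:ℂ) * (‖t‖:ℂ)^2 + Complex.I * ((inner ℝ x t : ℝ) : ℂ)).re = -(s * ‖t‖^2) := by
    simp [← Complex.ofReal_pow]
  have him : (-(s:ℂ) * (‖t‖:ℂ)^2 + Complex.I * ((inner ℝ x t : ℝ) : ℂ)).im = inner ℝ x t := by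
    simp [← Complex.ofReal_pow]
  rw [Complex.exp_re, hre, him, real_inner_comm, mul_comm]

lemma aux_B {s : ℝ} (hs : 0 < s) (x : EuclideanSpace ℝ (Fin d)) :
    ∫ t : EuclideanSpace ℝ (Fin d), (1 - Real.cos (inner ℝ t x)) * Real.exp (-(s * ‖t‖^2))
      = (π/s) ^ ((d:ℝ)/2) * (1 - Real.exp (-(‖x‖^2 / (4*s)))) := by
  have hfr : Module.finrank ℝ (EuclideanSpace ℝ (Fin d)) = d := finrank_euclideanSpace_fin
  have hsplit : (fun t : EuclideanSpace ℝ (Fin d) =>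
      (1 - Real.cos (inner ℝ t x)) * Real.exp (-(s * ‖t‖^2)))
      = fun t => Real.exp (-(s * ‖t‖^2)) - Real.cos (inner ℝ t x) * Real.exp (-(s * ‖t‖^2)) := by
    funext t; ring
  rw [hsplit, integral_sub (aux_exp_integrable hs) (aux_cos_integrable hs x)]
  have h1 : ∫ t : EuclideanSpace ℝ (Fin d), Real.exp (-(s * ‖t‖^2))
      = (π/s) ^ ((d:ℝ)/2) := by
    have := GaussianFourier.integral_rexp_neg_mul_sq_norm
      (V := EuclideanSpace ℝ (Fin d)) hs
    rw [hfr] at this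
    simp only [neg_mul] at this ⊢
    exact this
  have h2 : ∫ t : EuclideanSpace ℝ (Fin d), Real.cos (inner ℝ t x) * Real.exp (-(s * ‖t‖^2))
      = (π/s) ^ ((d:ℝ)/2) * Real.exp (-(‖x‖^2 / (4*s))) := by
    have hc := GaussianFourier.integral_cexp_neg_mul_sq_norm_add
      (show 0 < (s:ℂ).re from hs) Complex.I x
    rw [hfr] at hc
    have hre := congrArg Complex.re hc
    have hswap := integral_re (GaussianFourier.integrable_cexp_neg_mul_sq_norm_add
      (show 0 < (s:ℂ).re from hs) Complex.I x)
    simp only [RCLike.re_eq_complex_re] at hswap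
    rw [← hswap] at hre
    have hL : ∫ t : EuclideanSpace ℝ (Fin d),
        (cexp (-(s:ℂ) * (‖t‖:ℂ)^2 + Complex.I * ((inner ℝ x t : ℝ) : ℂ))).re
        = ∫ t : EuclideanSpace ℝ (Fin d), Real.cos (inner ℝ t x) * Real.exp (-(s * ‖t‖^2)) := by
      refine integral_congr_ae (Filter.Eventually.of_forall fun t => ?_)
      have hre' : (-(s:ℂ) * (‖t‖:ℂ)^2 + Complex.I * ((inner ℝ x t : ℝ) : ℂ)).re
          = -(s * ‖t‖^2) := by
        simp [← Complex.ofReal_pow]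
      have him : (-(s:ℂ) * (‖t‖:ℂ)^2 + Complex.I * ((inner ℝ x t : ℝ) : ℂ)).im = inner ℝ x t := by
        simp [← Complex.ofReal_pow]
      show (cexp (-(s:ℂ) * (‖t‖:ℂ)^2 + Complex.I * ((inner ℝ x t : ℝ) : ℂ))).re
        = Real.cos (inner ℝ t x) * Real.exp (-(s * ‖t‖^2))
      rw [Complex.exp_re, hre', him, real_inner_comm, mul_comm]
    have hR : (((π:ℂ)/(s:ℂ)) ^ (((d:ℕ):ℂ)/2) * cexp (Complex.I^2 * (‖x‖:ℂ)^2 / (4*(s:ℂ)))).re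
        = (π/s) ^ ((d:ℝ)/2) * Real.exp (-(‖x‖^2 / (4*s))) := by
      rw [Complex.I_sq]
      rw [show (-1 : ℂ) * (‖x‖:ℂ)^2 / (4*(s:ℂ)) = ((-(‖x‖^2 / (4*s)) : ℝ) : ℂ) by
        push_cast; field_simp]
      rw [← Complex.ofReal_exp]
      rw [show ((π:ℂ)/(s:ℂ)) = ((π/s : ℝ) : ℂ) by push_cast; ring]
      rw [show (((d:ℕ):ℂ)/2) = (((d:ℝ)/2 : ℝ) : ℂ) by push_cast; ring]
      rw [← Complex.ofReal_cpow (by positivity)]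
      rw [← Complex.ofReal_mul, Complex.ofReal_re]
    rw [hL, hR] at hre
    exact hre
  rw [h1, h2]
  ring

end Gaussian

section Aux2
open Set Filter Topology

-- section integral value for fixed s > 0
lemma aux_sec {d : ℕ} {α : ℝ} (x : EuclideanSpace ℝ (Fin d)) {s : ℝ} (hs : 0 < s) :
    ∫ t : EuclideanSpace ℝ (Fin d),
        (1 - Real.cos (inner ℝ t x)) * (s ^ (((d:ℝ)+α)/2 - 1) * Real.exp (-(s * ‖t‖^2)))
      = π ^ ((d:ℝ)/2) * (s ^ (α/2 - 1) * (1 - Real.exp (-((‖x‖^2/4) / s)))) := by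
  have h1 : (fun t : EuclideanSpace ℝ (Fin d) =>
      (1 - Real.cos (inner ℝ t x)) * (s ^ (((d:ℝ)+α)/2 - 1) * Real.exp (-(s * ‖t‖^2))))
      = fun t => s ^ (((d:ℝ)+α)/2 - 1) *
          ((1 - Real.cos (inner ℝ t x)) * Real.exp (-(s * ‖t‖^2))) := by
    funext t; ring
  rw [h1, integral_const_mul, aux_B hs x]
  have h2 : (π/s) ^ ((d:ℝ)/2) = π ^ ((d:ℝ)/2) / s ^ ((d:ℝ)/2) :=
    Real.div_rpow pi_pos.le hs.le _
  have h3 : s ^ (((d:ℝ)+α)/2 - 1) / s ^ ((d:ℝ)/2) = s ^ (α/2 - 1) := by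
    rw [← Real.rpow_sub hs]; congr 1; ring
  have h4 : ‖x‖^2 / (4*s) = (‖x‖^2/4) / s := by ring
  rw [h2, h4, ← h3]
  field_simp

end Aux2

section Main
open Set Filter Topology


/-- For `α ∈ (0,2)`, `d ≥ 1` and any nonzero `x ∈ ℝ^d`,
`∫ (1 - cos ⟪t,x⟫) / ‖t‖^{d+α} dt = C(d,α) ‖x‖^α`. -/
theorem integral_one_sub_cos_inner_div_norm_rpow
    (d : ℕ) (hd : 1 ≤ d) (α : ℝ) (hα : 0 < α) (hα2 : α < 2)
    (x : EuclideanSpace ℝ (Fin d)) (hx : x ≠ 0) :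
    ∫ t : EuclideanSpace ℝ (Fin d),
        (1 - Real.cos (inner ℝ t x)) / ‖t‖ ^ ((d : ℝ) + α) =
      energyConst d α * ‖x‖ ^ α := by
  set p : ℝ := ((d:ℝ) + α)/2 with hpdef
  have hp : 0 < p := by
    have h1 : (1:ℝ) ≤ (d:ℝ) := by exact_mod_cast hd
    rw [hpdef]; positivity
  have hΓp : Real.Gamma p ≠ 0 := (Real.Gamma_pos_of_pos hp).ne'
  have hxpos : 0 < ‖x‖ := norm_pos_iff.mpr hx
  set f : ℝ → EuclideanSpace ℝ (Fin d) → ℝ := fun s t =>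
    (1 - Real.cos (inner ℝ t x)) * (s ^ (p - 1) * Real.exp (-(s * ‖t‖^2))) with hf
  set μ : Measure ℝ := volume.restrict (Ioi 0) with hμ
  -- nonnegativity of f
  have hfnonneg : ∀ s : ℝ, 0 < s → ∀ t : EuclideanSpace ℝ (Fin d), 0 ≤ f s t := by
    intro s hs t
    have h1 : 0 ≤ 1 - Real.cos (inner ℝ t x) := one_sub_cos_nonneg _
    positivity
  -- measurability
  have hmeas : AEStronglyMeasurable (Function.uncurry f) (μ.prod volume) := by
    have c1 : Continuous fun z : ℝ × EuclideanSpace ℝ (Fin d) => 1 - Real.cos (inner ℝ z.2 x) :=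
      continuous_const.sub (Real.continuous_cos.comp (Continuous.inner continuous_snd continuous_const))
    have c2 : Measurable fun z : ℝ × EuclideanSpace ℝ (Fin d) => z.1 ^ (p - 1) :=
      measurable_fst.pow_const (p - 1)
    have c3 : Continuous fun z : ℝ × EuclideanSpace ℝ (Fin d) => Real.exp (-(z.1 * ‖z.2‖^2)) :=
      Real.continuous_exp.comp ((continuous_fst.mul (continuous_snd.norm.pow 2)).neg)
    exact ((c1.measurable.mul (c2.mul c3.measurable))).aestronglyMeasurable
  -- sections integrable
  have hsec : ∀ s : ℝ, 0 < s → Integrable (f s) := by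
    intro s hs
    refine Integrable.mono' (((aux_exp_integrable hs).const_mul (2 * s ^ (p-1)))) ?_ ?_
    · have : Continuous (f s) := by
        exact (continuous_const.sub
          (Real.continuous_cos.comp (Continuous.inner continuous_id continuous_const))).mul
          (continuous_const.mul (Real.continuous_exp.comp ((continuous_const.mul (continuous_norm.pow 2)).neg)))
      exact this.aestronglyMeasurable
    · refine Filter.Eventually.of_forall fun t => ?_
      have h1 : ‖1 - Real.cos (inner ℝ t x)‖ ≤ 2 := abs_one_sub_cos_le _
      have h2 : (0:ℝ) ≤ s ^ (p-1) * Real.exp (-(s * ‖t‖^2)) := by positivity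
      calc ‖f s t‖ = ‖1 - Real.cos (inner ℝ t x)‖ * (s ^ (p-1) * Real.exp (-(s * ‖t‖^2))) := by
            rw [hf]; simp only [norm_mul]
            rw [Real.norm_eq_abs (s ^ (p-1)), abs_of_nonneg (Real.rpow_nonneg (le_of_lt hs) _),
              Real.norm_eq_abs (Real.exp _), abs_of_nonneg (Real.exp_pos _).le]
        _ ≤ 2 * (s ^ (p-1) * Real.exp (-(s * ‖t‖^2))) := by
            exact mul_le_mul_of_nonneg_right h1 h2
        _ = 2 * s ^ (p-1) * Real.exp (-(s * ‖t‖^2)) := by ring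
  -- the iterated norm integral is integrable
  have hnice : Integrable (fun s : ℝ =>
      π ^ ((d:ℝ)/2) * (s ^ (α/2 - 1) * (1 - Real.exp (-((‖x‖^2/4) / s))))) μ :=
    (intB (by linarith) (by linarith) (by positivity)).const_mul _
  have hnorm : Integrable (fun s : ℝ => ∫ t : EuclideanSpace ℝ (Fin d), ‖f s t‖) μ := by
    refine hnice.congr ?_
    rw [hμ]
    filter_upwards [ae_restrict_mem measurableSet_Ioi] with s hs
    have hs0 : (0:ℝ) < s := hs
    have : ∫ t : EuclideanSpace ℝ (Fin d), ‖f s t‖ = ∫ t : EuclideanSpace ℝ (Fin d), f s t :=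
      integral_congr_ae (Filter.Eventually.of_forall fun t =>
        norm_of_nonneg (hfnonneg s hs0 t))
    rw [this, hf]
    exact (aux_sec x hs0).symm
  -- product integrability
  have hInt : Integrable (Function.uncurry f) (μ.prod volume) := by
    refine (integrable_prod_iff hmeas).mpr ⟨?_, hnorm⟩
    rw [hμ]
    filter_upwards [ae_restrict_mem measurableSet_Ioi] with s hs
    exact hsec s hs
  -- step A : pointwise identity
  have hae : ∀ᵐ t : EuclideanSpace ℝ (Fin d), t ≠ 0 := by
    have h0 : (volume : Measure (EuclideanSpace ℝ (Fin d))) {0} = 0 := by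
      have := Measure.addHaar_submodule (volume : Measure (EuclideanSpace ℝ (Fin d))) ⊥ ?_
      · rwa [Submodule.bot_coe] at this
      · haveI : Nonempty (Fin d) := ⟨⟨0, hd⟩⟩
        exact bot_ne_top
    rw [ae_iff]
    convert h0 using 2
    ext t; simp
  have stepA : ∫ t : EuclideanSpace ℝ (Fin d), (1 - Real.cos (inner ℝ t x)) / ‖t‖ ^ ((d : ℝ) + α)
      = ∫ t : EuclideanSpace ℝ (Fin d), (1/Real.Gamma p) * ∫ s in Ioi (0:ℝ), f s t := by
    refine integral_congr_ae ?_
    filter_upwards [hae] with t ht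
    have hB : (0:ℝ) < ‖t‖^2 := by
      have := norm_pos_iff.mpr ht; positivity
    have hinner : ∫ s in Ioi (0:ℝ), f s t
        = (1 - Real.cos (inner ℝ t x)) * ((1/‖t‖^2) ^ p * Real.Gamma p) := by
      rw [hf]
      have hcomm : ∀ s ∈ Ioi (0:ℝ),
          (1 - Real.cos (inner ℝ t x)) * (s ^ (p - 1) * Real.exp (-(s * ‖t‖^2)))
          = (1 - Real.cos (inner ℝ t x)) * (s ^ (p - 1) * Real.exp (-(‖t‖^2 * s))) := by
        intro s _; rw [mul_comm s (‖t‖^2)]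
      rw [setIntegral_congr_fun measurableSet_Ioi hcomm, integral_const_mul,
        Real.integral_rpow_mul_exp_neg_mul_Ioi hp hB]
    rw [hinner]
    have hBp : (‖t‖^2 : ℝ) ^ p = ‖t‖ ^ ((d:ℝ) + α) := by
      rw [← Real.rpow_natCast ‖t‖ 2, ← Real.rpow_mul (norm_nonneg t)]
      congr 1
      rw [hpdef]; push_cast; ring
    have h1B : ((1:ℝ)/‖t‖^2) ^ p = 1/‖t‖^((d:ℝ)+α) := by
      rw [Real.div_rpow zero_le_one (by positivity), Real.one_rpow, hBp]
    rw [h1B]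
    field_simp
  have hswap : (∫ t : EuclideanSpace ℝ (Fin d), ∫ s in Ioi (0:ℝ), f s t)
      = ∫ s in Ioi (0:ℝ), ∫ t : EuclideanSpace ℝ (Fin d), f s t := by
    rw [← hμ]
    exact (integral_integral_swap hInt).symm
  have hDval : (∫ s in Ioi (0:ℝ), ∫ t : EuclideanSpace ℝ (Fin d), f s t)
      = π ^ ((d:ℝ)/2) * ((‖x‖^2/4) ^ (α/2) * ((2/α) * Real.Gamma (1 - α/2))) := by
    have hcongr : ∀ s ∈ Ioi (0:ℝ), (∫ t : EuclideanSpace ℝ (Fin d), f s t)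
        = π ^ ((d:ℝ)/2) * (s ^ (α/2 - 1) * (1 - Real.exp (-((‖x‖^2/4) / s)))) := by
      intro s hs
      rw [hf]
      exact aux_sec x hs
    rw [setIntegral_congr_fun measurableSet_Ioi hcongr, integral_const_mul,
      aux_C hα hα2 (by positivity : (0:ℝ) < ‖x‖^2/4)]
  rw [stepA, integral_const_mul, hswap, hDval]
  have hc' : (‖x‖^2/4 : ℝ) ^ (α/2) = ‖x‖^α / 2^α := by
    rw [show (‖x‖^2/4 : ℝ) = (‖x‖/2)^2 by ring, ← Real.rpow_natCast (‖x‖/2) 2,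
      ← Real.rpow_mul (by positivity)]
    rw [show ((2:ℕ):ℝ) * (α/2) = α by push_cast; ring]
    exact Real.div_rpow (norm_nonneg x) (by norm_num) α
  rw [hc']
  simp only [energyConst]
  have h2α : (0:ℝ) < 2 ^ α := Real.rpow_pos_of_pos two_pos α
  have hΓ2 : (0:ℝ) < Real.Gamma (1 - α/2) := Real.Gamma_pos_of_pos (by linarith)
  rw [← hpdef]
  field_simp

end Main
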